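/- The probit intensity satisfies condition (A5): lim_{x→∞} (1/λ_probit(x))/x² = ∞. -/

import Mathlib

noncomputable def normalPdf (x : ℝ) : ℝ := Real.exp (-x ^ 2 / 2) / Real.sqrt (2 * Real.pi)

noncomputable def normalCdf (x : ℝ) : ℝ := ∫ t in Set.Iic x, normalPdf t

noncomputable def lambdaProbit (x : ℝ) : ℝ :=
  normalPdf x ^ 2 / (normalCdf x * (1 - normalCdf x))

open MeasureTheory Real Set Filter

lemma normalPdf_pos (x : ℝ) : 0 < normalPdf x := by
  unfold normalPdf
  positivity

lemma normalPdf_integrable : Integrable normalPdf := by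
  have h : Integrable (fun x : ℝ => Real.exp (-(1/2 : ℝ) * x ^ 2)) :=
    integrable_exp_neg_mul_sq (by norm_num)
  have := h.div_const (Real.sqrt (2 * Real.pi))
  convert this using 2 with x
  unfold normalPdf
  ring_nf

lemma normalPdf_total : ∫ x, normalPdf x = 1 := by
  unfold normalPdf
  rw [MeasureTheory.integral_div]
  have h := integral_gaussian (1/2 : ℝ)
  have h2 : ∫ x : ℝ, Real.exp (-x ^ 2 / 2) = Real.sqrt (2 * Real.pi) := by
    rw [show (2 * Real.pi) = Real.pi / (1/2) by ring, ← h]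
    congr 1 with x
    ring_nf
  rw [h2]
  have : Real.sqrt (2 * Real.pi) ≠ 0 := by positivity
  field_simp

lemma normalCdf_add_tail (x : ℝ) :
    normalCdf x + ∫ t in Set.Ioi x, normalPdf t = 1 := by
  rw [normalCdf, intervalIntegral.integral_Iic_add_Ioi
    normalPdf_integrable.integrableOn normalPdf_integrable.integrableOn, normalPdf_total]

lemma normalCdf_zero : normalCdf 0 = (1/2 : ℝ) := by
  have heven : ∀ t : ℝ, normalPdf (-t) = normalPdf t := by
    intro t; unfold normalPdf; rw [neg_pow]; ring_nf
  have h1 : normalCdf 0 = ∫ t in Set.Ioi (0:ℝ), normalPdf t := by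
    rw [normalCdf]
    rw [show (0:ℝ) = -0 by ring, ← integral_comp_neg_Iic]
    simp_rw [heven]
    norm_num
  have h2 := normalCdf_add_tail 0
  rw [← h1] at h2
  linarith

lemma normalCdf_half_le {x : ℝ} (hx : 0 ≤ x) : (1/2 : ℝ) ≤ normalCdf x := by
  rw [← normalCdf_zero]
  unfold normalCdf
  apply setIntegral_mono_set normalPdf_integrable.integrableOn
  · exact Filter.Eventually.of_forall fun t => (normalPdf_pos t).le
  · exact HasSubset.Subset.eventuallyLE (Set.Iic_subset_Iic.mpr hx)

lemma tail_lower {x : ℝ} (hx : 0 ≤ x) :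
    normalPdf (x + 1) ≤ 1 - normalCdf x := by
  have h := normalCdf_add_tail x
  have hsub : ∫ t in Set.Ioc x (x+1), normalPdf t ≤ ∫ t in Set.Ioi x, normalPdf t := by
    apply setIntegral_mono_set normalPdf_integrable.integrableOn
    · exact Filter.Eventually.of_forall fun t => (normalPdf_pos t).le
    · exact HasSubset.Subset.eventuallyLE Set.Ioc_subset_Ioi_self
  have hconst : normalPdf (x+1) * ((x+1) - x) ≤ ∫ t in Set.Ioc x (x+1), normalPdf t := by
    have : ∫ t in Set.Ioc x (x+1), normalPdf (x+1) ≤ ∫ t in Set.Ioc x (x+1), normalPdf t := by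
      apply setIntegral_mono_on ((integrableOn_const_iff).mpr (Or.inr (by simp)))
        normalPdf_integrable.integrableOn measurableSet_Ioc
      intro t ht
      unfold normalPdf
      apply div_le_div_of_nonneg_right _ (by positivity)
      apply Real.exp_le_exp.mpr
      have ht1 : 0 ≤ t := le_trans hx ht.1.le
      have ht2 : t ≤ x + 1 := ht.2
      nlinarith
    simpa [Real.volume_Ioc, ENNReal.toReal_ofReal (by linarith : (0:ℝ) ≤ x + 1 - x)] using this
  simp only [add_sub_cancel_left, mul_one] at hconst
  linarith [le_trans hconst hsub]

lemma exp_sq_div_tendsto :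
    Tendsto (fun x : ℝ => Real.exp ((x^2 - 2*x - 1)/2) / x ^ 2) atTop atTop := by
  have h0 : Tendsto (fun z : ℝ => Real.exp z / z ^ 1) atTop atTop :=
    Real.tendsto_exp_div_pow_atTop 1
  have hq : Tendsto (fun y : ℝ => y / 4) atTop atTop :=
    Tendsto.atTop_div_const (by norm_num) tendsto_id
  have h1 : Tendsto (fun y : ℝ => Real.exp (y/4) / (y/4) ^ 1) atTop atTop := h0.comp hq
  have h2 : Tendsto (fun y : ℝ => Real.exp (y/4) / y) atTop atTop := by
    have h3 := h1.atTop_mul_const (show (0:ℝ) < 1/4 by norm_num)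
    apply h3.congr'
    filter_upwards [eventually_gt_atTop (0:ℝ)] with y hy
    field_simp
  have hsq : Tendsto (fun x : ℝ => x ^ 2) atTop atTop :=
    tendsto_pow_atTop two_ne_zero
  have h4 : Tendsto (fun x : ℝ => Real.exp (x^2/4) / x^2) atTop atTop := h2.comp hsq
  apply tendsto_atTop_mono' _ _ h4
  filter_upwards [eventually_ge_atTop (5:ℝ)] with x hx
  apply div_le_div_of_nonneg_right _ (by positivity)
  exact Real.exp_le_exp.mpr (by nlinarith)

lemma aux_tendsto :
    Tendsto (fun x : ℝ => (1/2) * (normalPdf (x+1) / normalPdf x ^ 2) / x ^ 2)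
      atTop atTop := by
  have key : ∀ x : ℝ, (1/2) * (normalPdf (x+1) / normalPdf x ^ 2) / x ^ 2
      = (Real.sqrt (2 * Real.pi) / 2) * (Real.exp ((x^2 - 2*x - 1)/2) / x ^ 2) := by
    intro x
    unfold normalPdf
    have hs : Real.sqrt (2 * Real.pi) ≠ 0 := by positivity
    have hsq : Real.exp (-x^2/2) ^ 2 = Real.exp (-x^2) := by
      rw [sq, ← Real.exp_add]; congr 1; ring
    have hxp : Real.exp ((x^2 - 2*x - 1)/2)
        = Real.exp (-(x+1)^2/2) / Real.exp (-x^2) := by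
      rw [← Real.exp_sub]; congr 1; ring
    rw [hxp, div_pow, hsq]
    set s := Real.sqrt (2 * Real.pi) with hsdef
    have e1 := Real.exp_ne_zero (-(x+1)^2/2)
    have e3 := Real.exp_ne_zero (-x^2)
    have hmain : (Real.exp (-(x+1)^2/2)/s) / (Real.exp (-x^2)/s^2)
        = s * (Real.exp (-(x+1)^2/2)/Real.exp (-x^2)) := by
      field_simp
    rw [hmain]
    ring
  simp_rw [key]
  exact Tendsto.const_mul_atTop (by positivity) exp_sq_div_tendsto

theorem probit_A5 :
    Filter.Tendsto (fun x : ℝ => (1 / lambdaProbit x) / x ^ 2)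
      Filter.atTop Filter.atTop := by
  apply tendsto_atTop_mono' _ _ aux_tendsto
  filter_upwards [eventually_ge_atTop (0:ℝ)] with x hx
  have hφ := normalPdf_pos x
  have hΦ : (1/2:ℝ) ≤ normalCdf x := normalCdf_half_le hx
  have htail := tail_lower hx
  have htail_pos : 0 < 1 - normalCdf x := lt_of_lt_of_le (normalPdf_pos _) htail
  rw [lambdaProbit, one_div_div]
  apply div_le_div_of_nonneg_right _ (by positivity)
  rw [mul_div_assoc']
  apply div_le_div_of_nonneg_right _ (by positivity)
  nlinarith
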